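/- If f : X → Y is a surjective continuous map between compact Hausdorff spaces, then the map μ ↦ (ψ ↦ μ(ψ ∘ f)) from OS(X) to OS(Y) is surjective. -/

import Mathlib

def IsOSFunctional {Z : Type*} [TopologicalSpace Z] (μ : C(Z, ℝ) → ℝ) : Prop :=
  μ 1 = 1 ∧
  (∀ φ ψ : C(Z, ℝ), φ ≤ ψ → μ φ ≤ μ ψ) ∧
  (∀ (φ : C(Z, ℝ)) (c : ℝ), μ (φ + ContinuousMap.const Z c) = μ φ + c) ∧
  (∀ (t : ℝ), 0 ≤ t → ∀ φ : C(Z, ℝ), μ (t • φ) = t * μ φ) ∧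
  (∀ φ ψ : C(Z, ℝ), μ (φ + ψ) ≤ μ φ + μ ψ)

theorem stmt_12 {X Y : Type*} [TopologicalSpace X] [CompactSpace X] [T2Space X]
    [TopologicalSpace Y] [CompactSpace Y] [T2Space Y]
    (f : C(X, Y)) (hf : Function.Surjective f)
    (ν : C(Y, ℝ) → ℝ) (hν : IsOSFunctional ν) :
    ∃ μ : C(X, ℝ) → ℝ, IsOSFunctional μ ∧ ∀ ψ : C(Y, ℝ), μ (ψ.comp f) = ν ψ := by
  obtain ⟨hν1, hνmono, hνwa, hνhom, hνsub⟩ := hν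
  have hν0 : ν 0 = 0 := by
    have := hνhom 0 le_rfl 0
    simpa using this
  have hνc : ∀ c : ℝ, ν (ContinuousMap.const Y c) = c := by
    intro c
    have := hνwa 0 c
    simpa [hν0] using this
  -- the set of values
  set S : C(X, ℝ) → Set ℝ := fun φ => {r | ∃ ψ : C(Y, ℝ), φ ≤ ψ.comp f ∧ ν ψ = r} with hS
  have hmemS : ∀ (φ : C(X, ℝ)) (ψ : C(Y, ℝ)), φ ≤ ψ.comp f → ν ψ ∈ S φ := by
    intro φ ψ h; exact ⟨ψ, h, rfl⟩
  have habs : ∀ (φ : C(X, ℝ)) (x : X), |φ x| ≤ ‖φ‖ := by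
    intro φ x
    simpa [Real.norm_eq_abs] using φ.norm_coe_le_norm x
  have hne : ∀ φ : C(X, ℝ), (S φ).Nonempty := by
    intro φ
    refine ⟨ν (ContinuousMap.const Y ‖φ‖), hmemS _ _ ?_⟩
    intro x
    exact le_trans (le_abs_self _) (habs φ x)
  have hbdd : ∀ φ : C(X, ℝ), BddBelow (S φ) := by
    intro φ
    refine ⟨-‖φ‖, ?_⟩
    rintro r ⟨ψ, hψ, rfl⟩
    have hle : ContinuousMap.const Y (-‖φ‖) ≤ ψ := by
      intro y
      obtain ⟨x, rfl⟩ := hf y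
      calc (-‖φ‖ : ℝ) ≤ φ x := neg_le_of_abs_le (habs φ x)
        _ ≤ ψ (f x) := hψ x
    calc (-‖φ‖ : ℝ) = ν (ContinuousMap.const Y (-‖φ‖)) := (hνc _).symm
      _ ≤ ν ψ := hνmono _ _ hle
  set μ : C(X, ℝ) → ℝ := fun φ => sInf (S φ) with hμ
  have hμle : ∀ (φ : C(X, ℝ)) (ψ : C(Y, ℝ)), φ ≤ ψ.comp f → μ φ ≤ ν ψ := by
    intro φ ψ h
    exact csInf_le (hbdd φ) (hmemS φ ψ h)
  have hkey : ∀ ψ : C(Y, ℝ), μ (ψ.comp f) = ν ψ := by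
    intro ψ
    refine le_antisymm (hμle _ ψ le_rfl) ?_
    refine le_csInf (hne _) ?_
    rintro r ⟨χ, hχ, rfl⟩
    refine hνmono _ _ ?_
    intro y
    obtain ⟨x, rfl⟩ := hf y
    exact hχ x
  refine ⟨μ, ⟨?_, ?_, ?_, ?_, ?_⟩, hkey⟩
  · -- μ 1 = 1
    have : (1 : C(X, ℝ)) = ContinuousMap.comp 1 f := by ext x; simp
    rw [this, hkey]; exact hν1
  · -- monotone
    intro φ ψ h
    refine csInf_le_csInf (hbdd φ) (hne ψ) ?_
    rintro r ⟨χ, hχ, rfl⟩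
    exact ⟨χ, le_trans h hχ, rfl⟩
  · -- weak additivity
    intro φ c
    refine le_antisymm ?_ ?_
    · have h1 : μ (φ + ContinuousMap.const X c) - c ≤ μ φ := by
        refine le_csInf (hne φ) ?_
        rintro r ⟨ψ, hψ, rfl⟩
        have hmem : φ + ContinuousMap.const X c ≤ (ψ + ContinuousMap.const Y c).comp f := by
          intro x
          simpa using add_le_add_right (hψ x) c
        have := hμle _ _ hmem
        rw [hνwa] at this
        linarith
      linarith
    · refine le_csInf (hne _) ?_
      rintro r ⟨ψ, hψ, rfl⟩
      have hmem : φ ≤ (ψ + ContinuousMap.const Y (-c)).comp f := by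
        intro x
        have := hψ x
        simp only [ContinuousMap.toFun_eq_coe, ContinuousMap.add_apply, ContinuousMap.const_apply,
          ContinuousMap.comp_apply] at this ⊢
        linarith
      have := hμle _ _ hmem
      rw [hνwa] at this
      linarith
  · -- positive homogeneity
    intro t ht φ
    rcases eq_or_lt_of_le ht with h0 | hpos
    · subst h0
      simp only [zero_smul, zero_mul]
      refine le_antisymm ?_ ?_
      · have : (0 : C(X, ℝ)) = ContinuousMap.comp 0 f := by ext x; simp
        rw [this, hkey, hν0]
      · refine le_csInf (hne _) ?_
        rintro r ⟨ψ, hψ, rfl⟩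
        have hle : (0 : C(Y, ℝ)) ≤ ψ := by
          intro y
          obtain ⟨x, rfl⟩ := hf y
          simpa using hψ x
        have := hνmono _ _ hle
        rw [hν0] at this
        exact this
    · refine le_antisymm ?_ ?_
      · have h1 : μ (t • φ) / t ≤ μ φ := by
          refine le_csInf (hne φ) ?_
          rintro r ⟨ψ, hψ, rfl⟩
          have hmem : t • φ ≤ (t • ψ).comp f := by
            intro x
            have := hψ x
            simp only [ContinuousMap.toFun_eq_coe, ContinuousMap.smul_apply, ContinuousMap.comp_apply,
              smul_eq_mul] at this ⊢
            exact mul_le_mul_of_nonneg_left this ht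
          have := hμle _ _ hmem
          rw [hνhom t ht] at this
          rw [div_le_iff₀ hpos]
          linarith [this]
        rw [div_le_iff₀ hpos] at h1
        linarith
      · refine le_csInf (hne _) ?_
        rintro r ⟨ψ, hψ, rfl⟩
        have hmem : φ ≤ (t⁻¹ • ψ).comp f := by
          intro x
          have := hψ x
          simp only [ContinuousMap.toFun_eq_coe, ContinuousMap.smul_apply, ContinuousMap.comp_apply,
            smul_eq_mul] at this ⊢
          rw [← mul_le_mul_iff_right₀ hpos]
          calc t * φ x ≤ ψ (f x) := this
            _ = t * (t⁻¹ * ψ (f x)) := by field_simp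
        have := hμle _ _ hmem
        rw [hνhom t⁻¹ (le_of_lt (inv_pos.mpr hpos))] at this
        calc t * μ φ ≤ t * (t⁻¹ * ν ψ) := by
              exact mul_le_mul_of_nonneg_left this ht
          _ = ν ψ := by field_simp
  · -- subadditivity
    intro φ ψ
    have key : ∀ r ∈ S φ, ∀ s ∈ S ψ, μ (φ + ψ) ≤ r + s := by
      rintro r ⟨χ₁, h₁, rfl⟩ s ⟨χ₂, h₂, rfl⟩
      have hmem : φ + ψ ≤ (χ₁ + χ₂).comp f := by
        intro x
        simpa using add_le_add (h₁ x) (h₂ x)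
      calc μ (φ + ψ) ≤ ν (χ₁ + χ₂) := hμle _ _ hmem
        _ ≤ ν χ₁ + ν χ₂ := hνsub _ _
    have h1 : ∀ s ∈ S ψ, μ (φ + ψ) - s ≤ μ φ := by
      intro s hs
      refine le_csInf (hne φ) ?_
      intro r hr
      linarith [key r hr s hs]
    have h2 : μ (φ + ψ) - μ ψ ≤ μ φ := by
      have : μ φ + μ ψ ≤ μ φ + μ ψ := le_rfl
      have h3 : ∀ s ∈ S ψ, μ (φ + ψ) - μ φ ≤ s := by
        intro s hs
        linarith [h1 s hs]
      have := le_csInf (hne ψ) h3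
      linarith
    linarith
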